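/- arXiv:1102.2717 — 2 statements merged into one kernel-verified Lean document; each statement's English description precedes it below -/
import Mathlib

section
/- Fix l ≠ k and let σ = σ_x^{lk} = |l⟩⟨k| + |k⟩⟨l| be an N×N matrix, let a be a nonzero real number, and let K be a Hermitian N×N matrix. Then there exist C > 0 and ξ0 > 0 such that for all ξ ∈ (0, ξ0) and all t ≥ 0: ‖e^{−i(ξ(a/2)σ + ξ²K)t} σ e^{i(ξ(a/2)σ + ξ²K)t} − σ‖ ≤ C ξ, i.e., the conjugation of σ by the unitary one-parameter group generated by ξ(a/2)σ + ξ²K stays within O(ξ) of σ uniformly in time. -/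
open Matrix

noncomputable section

attribute [local instance] Matrix.normedAddCommGroup Matrix.normedSpace

/-- `σ_x^{lk} = |l⟩⟨k| + |k⟩⟨l|` as a complex `N × N` matrix. -/
def sigmaXC {N : ℕ} (l k : Fin N) : Matrix (Fin N) (Fin N) ℂ :=
  Matrix.single l k 1 + Matrix.single k l 1

/-- Entries of a unitary matrix are bounded by 1. -/
lemma unitary_entry_le {N : ℕ} {U : Matrix (Fin N) (Fin N) ℂ} (hU : U * Uᴴ = 1)
    (i p : Fin N) : ‖U i p‖ ≤ 1 := by
  have h : (U * Uᴴ) i i = 1 := by rw [hU]; simp [Matrix.one_apply]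
  rw [Matrix.mul_apply] at h
  have hsum : ∑ q, ‖U i q‖ ^ 2 = 1 := by
    have := congrArg Complex.re h
    simpa [Matrix.conjTranspose_apply, Complex.mul_conj', Complex.mul_conj,
      ← Complex.normSq_eq_norm_sq, Complex.normSq_eq_norm_sq, sq] using this
  nlinarith [Finset.single_le_sum (f := fun q => ‖U i q‖ ^ 2)
      (fun q _ => sq_nonneg ‖U i q‖) (Finset.mem_univ p), norm_nonneg (U i p)]

/-- conjugation by a unitary blows up sup norm by at most N². -/
lemma conj_norm_le {N : ℕ} {U : Matrix (Fin N) (Fin N) ℂ} (hU : U * Uᴴ = 1)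
    (M : Matrix (Fin N) (Fin N) ℂ) : ‖U * M * Uᴴ‖ ≤ (N : ℝ)^2 * ‖M‖ := by
  rw [Matrix.norm_le_iff (by positivity)]
  intro i j
  have : (U * M * Uᴴ) i j = ∑ p, ∑ q, U i p * M p q * star (U j q) := by
    simp only [Matrix.mul_apply, Finset.sum_mul, Matrix.conjTranspose_apply]
    exact Finset.sum_comm
  rw [this]
  calc ‖∑ p, ∑ q, U i p * M p q * star (U j q)‖
      ≤ ∑ p, ∑ q, ‖U i p * M p q * star (U j q)‖ := by
        refine (norm_sum_le _ _).trans (Finset.sum_le_sum fun p _ => norm_sum_le _ _)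
    _ ≤ ∑ p : Fin N, ∑ q : Fin N, ‖M‖ := by
        refine Finset.sum_le_sum fun p _ => Finset.sum_le_sum fun q _ => ?_
        rw [norm_mul, norm_mul, norm_star]
        have h1 := unitary_entry_le hU i p
        have h2 : ‖M p q‖ ≤ ‖M‖ := Matrix.norm_entry_le_entrywise_sup_norm M
        have h3 := unitary_entry_le hU j q
        calc ‖U i p‖ * ‖M p q‖ * ‖U j q‖
            ≤ (1 * ‖M‖) * 1 :=
              mul_le_mul (mul_le_mul h1 h2 (norm_nonneg _) zero_le_one) h3
                (norm_nonneg _) (by positivity)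
          _ = ‖M‖ := by ring
    _ = (N:ℝ)^2 * ‖M‖ := by simp [Finset.sum_const]; ring

lemma sigmaXC_herm {N : ℕ} (l k : Fin N) : (sigmaXC l k)ᴴ = sigmaXC l k := by
  ext i j
  simp only [sigmaXC, Matrix.conjTranspose_apply, Matrix.add_apply, Matrix.single,
    Matrix.of_apply, star_add, apply_ite (star : ℂ → ℂ), star_one, star_zero]
  rw [if_congr (and_comm (a := l = j) (b := k = i)) rfl rfl,
    if_congr (and_comm (a := k = j) (b := l = i)) rfl rfl, add_comm]

/-- For `σ = σ_x^{lk}`, `a ≠ 0` real and `K` Hermitian, the conjugation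
of `σ` by the one-parameter unitary group generated by `ξ (a/2) σ + ξ² K` stays within
`O(ξ)` of `σ`, uniformly in `t ≥ 0`. -/
theorem conjugation_stays_close {N : ℕ} (l k : Fin N) (hlk : l ≠ k)
    (a : ℝ) (ha : a ≠ 0)
    (K : Matrix (Fin N) (Fin N) ℂ) (hK : K.IsHermitian) :
    ∃ C : ℝ, 0 < C ∧ ∃ ξ0 : ℝ, 0 < ξ0 ∧
      ∀ ξ ∈ Set.Ioo (0:ℝ) ξ0, ∀ t : ℝ, 0 ≤ t →
        ‖NormedSpace.exp
              ((-(Complex.I * (t:ℂ))) • ((↑(ξ * (a / 2)) : ℂ) • sigmaXC l k + ((ξ:ℂ) ^ 2) • K)) *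
            sigmaXC l k *
            NormedSpace.exp
              ((Complex.I * (t:ℂ)) • ((↑(ξ * (a / 2)) : ℂ) • sigmaXC l k + ((ξ:ℂ) ^ 2) • K)) -
          sigmaXC l k‖ ≤ C * ξ := by
  have haK : (0:ℝ) < 2 / |a| * ((N:ℝ)^2 + 1) * ‖K‖ + 1 := by positivity
  refine ⟨2 / |a| * ((N:ℝ)^2 + 1) * ‖K‖ + 1, haK, 1, one_pos, ?_⟩
  rintro ξ ⟨hξ0, hξ1⟩ t _
  set σ : Matrix (Fin N) (Fin N) ℂ := sigmaXC l k with hσ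
  set c : ℂ := (↑(ξ * (a / 2)) : ℂ) with hc
  set H : Matrix (Fin N) (Fin N) ℂ := c • σ + ((ξ:ℂ)^2) • K with hH
  set U : Matrix (Fin N) (Fin N) ℂ := NormedSpace.exp ((-(Complex.I * (t:ℂ))) • H) with hU
  set V : Matrix (Fin N) (Fin N) ℂ := NormedSpace.exp ((Complex.I * (t:ℂ)) • H) with hVdef
  have hc0 : c ≠ 0 := by
    simp only [hc, ne_eq, Complex.ofReal_eq_zero]
    positivity
  have hHH : Hᴴ = H := by
    rw [hH, Matrix.conjTranspose_add, Matrix.conjTranspose_smul, Matrix.conjTranspose_smul,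
      sigmaXC_herm, hK]
    congr 1
    · rw [hc, Complex.star_def, Complex.conj_ofReal]
    · congr 1
      rw [Complex.star_def, map_pow, Complex.conj_ofReal]
  have hV : V = Uᴴ := by
    rw [hU, ← Matrix.exp_conjTranspose, hVdef]
    congr 1
    rw [Matrix.conjTranspose_smul, hHH]
    congr 1
    simp [Complex.star_def, Complex.conj_I]
  have hcomm : Commute ((-(Complex.I * (t:ℂ))) • H) ((Complex.I * (t:ℂ)) • H) :=
    ((Commute.refl H).smul_left _).smul_right _
  have hUV : U * V = 1 := by
    rw [hU, hVdef, ← Matrix.exp_add_of_commute _ _ hcomm, neg_smul, neg_add_cancel,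
      NormedSpace.exp_zero]
  have hcommH : U * H = H * U :=
    (((Commute.refl H).smul_left (-(Complex.I * (t:ℂ)))).exp_left)
  have hUHV : U * H * V = H := by
    rw [hcommH, mul_assoc, hUV, mul_one]
  have hσeq : σ = c⁻¹ • H - (c⁻¹ * (ξ:ℂ)^2) • K := by
    rw [hH, smul_add, smul_smul, inv_mul_cancel₀ hc0, one_smul, smul_smul]
    abel
  have key : U * σ * V - σ = (c⁻¹ * (ξ:ℂ)^2) • (K - U * K * V) := by
    calc U * σ * V - σ
        = c⁻¹ • (U * H * V) - (c⁻¹ * (ξ:ℂ)^2) • (U * K * V) - σ := by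
          rw [hσeq]
          simp only [Matrix.sub_mul, Matrix.mul_sub, Matrix.smul_mul, Matrix.mul_smul]
      _ = (c⁻¹ * (ξ:ℂ)^2) • (K - U * K * V) := by
          rw [hUHV, hσeq, smul_sub]
          abel
  rw [key, norm_smul]
  have hnc : ‖c⁻¹ * (ξ:ℂ)^2‖ = 2 * ξ / |a| := by
    rw [norm_mul, norm_inv, norm_pow, hc, Complex.norm_real, Complex.norm_real,
      Real.norm_eq_abs, Real.norm_eq_abs, abs_mul, abs_of_pos hξ0, abs_div, abs_two]
    have h1 : |a| ≠ 0 := abs_ne_zero.mpr ha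
    have h2 : ξ ≠ 0 := ne_of_gt hξ0
    field_simp
  have hKbd : ‖K - U * K * V‖ ≤ ((N:ℝ)^2 + 1) * ‖K‖ := by
    have h1 : ‖U * K * V‖ ≤ (N:ℝ)^2 * ‖K‖ := by
      rw [hV]
      exact conj_norm_le (hV ▸ hUV) K
    calc ‖K - U * K * V‖ ≤ ‖K‖ + ‖U * K * V‖ := norm_sub_le _ _
      _ ≤ ‖K‖ + (N:ℝ)^2 * ‖K‖ := by linarith
      _ = ((N:ℝ)^2 + 1) * ‖K‖ := by ring
  rw [hnc]
  calc 2 * ξ / |a| * ‖K - U * K * V‖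
      ≤ 2 * ξ / |a| * (((N:ℝ)^2 + 1) * ‖K‖) := by
        apply mul_le_mul_of_nonneg_left hKbd
        positivity
    _ = (2 / |a| * ((N:ℝ)^2 + 1) * ‖K‖) * ξ := by ring
    _ ≤ (2 / |a| * ((N:ℝ)^2 + 1) * ‖K‖ + 1) * ξ := by nlinarith
end
end

section
/- Let ω_1, …, ω_m be distinct nonzero real numbers and A_1, …, A_m be N×N complex matrices, and suppose that H(τ) = Σ_{k=1}^m e^{iω_k τ} A_k is Hermitian for every τ ∈ ℝ. Then the average L = lim_{θ→∞} (1/θ) ∫_0^θ H(τ) H'(τ) dτ exists (where H'(τ) = Σ_k iω_k e^{iω_k τ} A_k), and the matrix K = −i L is Hermitian. -/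
open Matrix MeasureTheory intervalIntegral Filter

noncomputable section

attribute [local instance] Matrix.normedAddCommGroup Matrix.normedSpace

lemma tendsto_avg_exp (μ : ℝ) :
    Tendsto (fun θ : ℝ => (θ⁻¹ : ℝ) • ∫ τ in (0:ℝ)..θ, Complex.exp (Complex.I * μ * τ))
      atTop (nhds (if μ = 0 then 1 else 0)) := by
  rcases eq_or_ne μ 0 with h | h
  · subst h
    simp only [if_pos rfl]
    have heq : ∀ᶠ θ : ℝ in atTop,
        (θ⁻¹ : ℝ) • (∫ τ in (0:ℝ)..θ, Complex.exp (Complex.I * (0:ℝ) * τ)) = 1 := by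
      filter_upwards [eventually_gt_atTop 0] with θ hθ
      simp [Complex.ofReal_zero, mul_zero, zero_mul, Complex.exp_zero,
        intervalIntegral.integral_const, Complex.real_smul, hθ.ne']
    exact Tendsto.congr' (heq.mono fun θ h => h.symm) tendsto_const_nhds
  · have hc : (Complex.I * μ) ≠ 0 := by
      simp [Complex.I_ne_zero, Complex.ofReal_ne_zero, h]
    simp only [if_neg h]
    have hint : ∀ θ : ℝ, (∫ τ in (0:ℝ)..θ, Complex.exp (Complex.I * μ * τ))
        = (Complex.exp (Complex.I * μ * θ) - 1) / (Complex.I * μ) := by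
      intro θ
      have := integral_exp_mul_complex (a := 0) (b := θ) hc
      simp only [mul_assoc] at this ⊢
      rw [this]
      simp
    have hbound : ∀ᶠ θ : ℝ in atTop,
        ‖(θ⁻¹ : ℝ) • ∫ τ in (0:ℝ)..θ, Complex.exp (Complex.I * μ * τ)‖
          ≤ θ⁻¹ * (2 / ‖(Complex.I * (μ:ℂ))‖) := by
      filter_upwards [eventually_gt_atTop 0] with θ hθ
      rw [hint θ, norm_smul, Real.norm_eq_abs, abs_of_pos (inv_pos.2 hθ)]
      gcongr
      rw [norm_div]
      gcongr
      calc ‖Complex.exp (Complex.I * μ * θ) - 1‖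
          ≤ ‖Complex.exp (Complex.I * μ * θ)‖ + ‖(1:ℂ)‖ := norm_sub_le _ _
        _ ≤ 2 := by
            have : ‖Complex.exp (Complex.I * μ * θ)‖ = 1 := by
              rw [Complex.norm_exp]
              simp [Complex.mul_re]
            rw [this]; norm_num
    have hlim : Tendsto (fun θ : ℝ => θ⁻¹ * (2 / ‖(Complex.I * (μ:ℂ))‖)) atTop (nhds 0) := by
      simpa using tendsto_inv_atTop_zero.mul_const (2 / ‖(Complex.I * (μ:ℂ))‖)
    exact squeeze_zero_norm' hbound hlim

lemma avg_sum {N m : ℕ} (ω : Fin m → ℝ) (B : Fin m → Fin m → Matrix (Fin N) (Fin N) ℂ)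
    (c : Fin m → Fin m → ℂ) :
    Tendsto (fun θ : ℝ => (θ⁻¹ : ℝ) • ∫ τ in (0:ℝ)..θ,
        ∑ j, ∑ k, (c j k * Complex.exp (Complex.I * ((ω j + ω k : ℝ)) * τ)) • B j k)
      atTop
      (nhds (∑ j, ∑ k, (if ω j + ω k = 0 then (1:ℂ) else 0) • (c j k • B j k))) := by
  have hcont : ∀ (j k : Fin m),
      Continuous fun τ : ℝ => (c j k * Complex.exp (Complex.I * ((ω j + ω k : ℝ)) * τ)) • B j k := by
    intro j k; fun_prop
  have key : ∀ θ : ℝ,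
      ((θ⁻¹ : ℝ) • ∫ τ in (0:ℝ)..θ,
        ∑ j, ∑ k, (c j k * Complex.exp (Complex.I * ((ω j + ω k : ℝ)) * τ)) • B j k)
      = ∑ j, ∑ k, ((θ⁻¹ : ℝ) •
          ∫ τ in (0:ℝ)..θ, Complex.exp (Complex.I * ((ω j + ω k : ℝ)) * τ)) • (c j k • B j k) := by
    intro θ
    rw [intervalIntegral.integral_finset_sum (fun j _ =>
      ((continuous_finset_sum _ (fun k _ => hcont j k)).intervalIntegrable _ _))]
    rw [Finset.smul_sum]
    refine Finset.sum_congr rfl fun j _ => ?_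
    rw [intervalIntegral.integral_finset_sum (fun k _ => ((hcont j k).intervalIntegrable _ _))]
    rw [Finset.smul_sum]
    refine Finset.sum_congr rfl fun k _ => ?_
    rw [intervalIntegral.integral_smul_const, intervalIntegral.integral_const_mul,
      mul_comm, mul_smul]
    exact (smul_assoc _ _ _).symm
  refine Tendsto.congr (fun θ => (key θ).symm) ?_
  refine tendsto_finset_sum _ fun j _ => tendsto_finset_sum _ fun k _ => ?_
  exact (tendsto_avg_exp (ω j + ω k)).smul_const (c j k • B j k)

lemma expand_HHprime {N m : ℕ} (ω : Fin m → ℝ) (A : Fin m → Matrix (Fin N) (Fin N) ℂ) (τ : ℝ) :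
    (∑ j, Complex.exp (Complex.I * (ω j) * τ) • A j) *
      (∑ j, (Complex.I * (ω j) * Complex.exp (Complex.I * (ω j) * τ)) • A j)
    = ∑ j, ∑ k, ((Complex.I * (ω k)) *
        Complex.exp (Complex.I * ((ω j + ω k : ℝ)) * τ)) • (A j * A k) := by
  rw [Finset.sum_mul_sum]
  refine Finset.sum_congr rfl fun j _ => Finset.sum_congr rfl fun k _ => ?_
  rw [smul_mul_smul_comm]
  congr 1
  rw [Complex.ofReal_add, show Complex.I * ((ω j : ℂ) + (ω k : ℂ)) * τ
      = Complex.I * (ω j) * τ + Complex.I * (ω k) * τ by ring, Complex.exp_add]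
  ring

lemma expand_HprimeH {N m : ℕ} (ω : Fin m → ℝ) (A : Fin m → Matrix (Fin N) (Fin N) ℂ) (τ : ℝ) :
    (∑ j, (Complex.I * (ω j) * Complex.exp (Complex.I * (ω j) * τ)) • A j) *
      (∑ j, Complex.exp (Complex.I * (ω j) * τ) • A j)
    = ∑ j, ∑ k, ((Complex.I * (ω j)) *
        Complex.exp (Complex.I * ((ω j + ω k : ℝ)) * τ)) • (A j * A k) := by
  rw [Finset.sum_mul_sum]
  refine Finset.sum_congr rfl fun j _ => Finset.sum_congr rfl fun k _ => ?_
  rw [smul_mul_smul_comm]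
  congr 1
  rw [Complex.ofReal_add, show Complex.I * ((ω j : ℂ) + (ω k : ℂ)) * τ
      = Complex.I * (ω j) * τ + Complex.I * (ω k) * τ by ring, Complex.exp_add]
  ring

lemma hasDerivAt_cexp_lin (a τ : ℝ) :
    HasDerivAt (fun t : ℝ => Complex.exp (Complex.I * a * t))
      (Complex.I * a * Complex.exp (Complex.I * a * τ)) τ := by
  have h0 : HasDerivAt (fun t : ℝ => (t : ℂ)) 1 τ := by
    simpa using (hasDerivAt_id τ).ofReal_comp
  have h1 : HasDerivAt (fun t : ℝ => Complex.I * a * (t : ℂ)) (Complex.I * a) τ := by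
    simpa using h0.const_mul (Complex.I * (a : ℂ))
  simpa [mul_comm] using h1.cexp

lemma hasDerivAt_H {N m : ℕ} (ω : Fin m → ℝ) (A : Fin m → Matrix (Fin N) (Fin N) ℂ) (τ : ℝ) :
    HasDerivAt (fun t : ℝ => ∑ j, Complex.exp (Complex.I * (ω j) * t) • A j)
      (∑ j, (Complex.I * (ω j) * Complex.exp (Complex.I * (ω j) * τ)) • A j) τ :=
  HasDerivAt.fun_sum fun j _ => (hasDerivAt_cexp_lin (ω j) τ).smul_const (A j)

lemma isClosed_hermitian {N : ℕ} :
    IsClosed {M : Matrix (Fin N) (Fin N) ℂ | M.IsHermitian} :=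
  isClosed_eq (continuous_id.matrix_conjTranspose) continuous_id

lemma real_smul_hermitian {N : ℕ} {M : Matrix (Fin N) (Fin N) ℂ} (r : ℝ)
    (h : M.IsHermitian) : (r • M).IsHermitian := by
  unfold Matrix.IsHermitian at *
  rw [Matrix.conjTranspose_smul, h, star_trivial]

lemma Hprime_hermitian {N m : ℕ} (ω : Fin m → ℝ) (A : Fin m → Matrix (Fin N) (Fin N) ℂ)
    (hHerm : ∀ τ : ℝ,
      (∑ j, Complex.exp (Complex.I * (ω j) * τ) • A j).IsHermitian) (τ : ℝ) :
    (∑ j, (Complex.I * (ω j) * Complex.exp (Complex.I * (ω j) * τ)) • A j).IsHermitian := by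
  have hs := hasDerivAt_iff_tendsto_slope.mp (hasDerivAt_H ω A τ)
  refine isClosed_hermitian.mem_of_tendsto hs (Filter.Eventually.of_forall fun y => ?_)
  simp only [Set.mem_setOf_eq, slope_def_module]
  exact real_smul_hermitian _ ((hHerm y).sub (hHerm τ))

def ctL (N : ℕ) : Matrix (Fin N) (Fin N) ℂ →L[ℝ] Matrix (Fin N) (Fin N) ℂ :=
  LinearMap.toContinuousLinearMap
    { toFun := Matrix.conjTranspose
      map_add' := fun A B => Matrix.conjTranspose_add A B
      map_smul' := fun r M => by
        simp [Matrix.conjTranspose_smul] }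

/-- Let `H(τ) = Σ_k e^{iω_k τ} A_k` be Hermitian for all `τ`, with
distinct nonzero real frequencies `ω_k`, and `H'(τ) = Σ_k iω_k e^{iω_k τ} A_k`.  Then
the average `L = lim_{θ→∞} (1/θ) ∫_0^θ H(τ) H'(τ) dτ` exists and `K = -i L` is
Hermitian. -/
theorem average_of_HHprime_hermitian {N m : ℕ}
    (ω : Fin m → ℝ) (A : Fin m → Matrix (Fin N) (Fin N) ℂ)
    (hinj : Function.Injective ω) (hω : ∀ j, ω j ≠ 0)
    (hHerm : ∀ τ : ℝ,
      (∑ j, Complex.exp (Complex.I * (ω j) * τ) • A j).IsHermitian) :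
    ∃ L : Matrix (Fin N) (Fin N) ℂ,
      Tendsto
        (fun θ : ℝ => (θ⁻¹ : ℝ) •
          ∫ τ in (0:ℝ)..θ,
            (∑ j, Complex.exp (Complex.I * (ω j) * τ) • A j) *
              (∑ j, (Complex.I * (ω j) * Complex.exp (Complex.I * (ω j) * τ)) • A j))
        atTop (nhds L) ∧
      ((-Complex.I) • L).IsHermitian := by
  classical
  set L : Matrix (Fin N) (Fin N) ℂ :=
    ∑ j, ∑ k, (if ω j + ω k = 0 then (1:ℂ) else 0) •
      ((Complex.I * (ω k : ℂ)) • (A j * A k)) with hLdef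
  set L' : Matrix (Fin N) (Fin N) ℂ :=
    ∑ j, ∑ k, (if ω j + ω k = 0 then (1:ℂ) else 0) •
      ((Complex.I * (ω j : ℂ)) • (A j * A k)) with hL'def
  have h1 : Tendsto
      (fun θ : ℝ => (θ⁻¹ : ℝ) •
        ∫ τ in (0:ℝ)..θ,
          (∑ j, Complex.exp (Complex.I * (ω j) * τ) • A j) *
            (∑ j, (Complex.I * (ω j) * Complex.exp (Complex.I * (ω j) * τ)) • A j))
      atTop (nhds L) := by
    refine (avg_sum ω (fun j k => A j * A k) (fun j k => Complex.I * (ω k))).congr fun θ => ?_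
    congr 1
    exact intervalIntegral.integral_congr fun τ _ => (expand_HHprime ω A τ).symm
  have h1' : Tendsto
      (fun θ : ℝ => (θ⁻¹ : ℝ) •
        ∫ τ in (0:ℝ)..θ,
          (∑ j, (Complex.I * (ω j) * Complex.exp (Complex.I * (ω j) * τ)) • A j) *
            (∑ j, Complex.exp (Complex.I * (ω j) * τ) • A j))
      atTop (nhds L') := by
    refine (avg_sum ω (fun j k => A j * A k) (fun j k => Complex.I * (ω j))).congr fun θ => ?_
    congr 1
    exact intervalIntegral.integral_congr fun τ _ => (expand_HprimeH ω A τ).symm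
  have hcontH : Continuous fun τ : ℝ => ∑ j, Complex.exp (Complex.I * (ω j) * τ) • A j := by
    fun_prop
  have hcontH' : Continuous fun τ : ℝ =>
      ∑ j, (Complex.I * (ω j) * Complex.exp (Complex.I * (ω j) * τ)) • A j := by
    fun_prop
  have hherm' := Hprime_hermitian ω A hHerm
  have hconj : ∀ θ : ℝ,
      ((θ⁻¹ : ℝ) • ∫ τ in (0:ℝ)..θ,
        (∑ j, Complex.exp (Complex.I * (ω j) * τ) • A j) *
          (∑ j, (Complex.I * (ω j) * Complex.exp (Complex.I * (ω j) * τ)) • A j))ᴴ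
      = (θ⁻¹ : ℝ) • ∫ τ in (0:ℝ)..θ,
          (∑ j, (Complex.I * (ω j) * Complex.exp (Complex.I * (ω j) * τ)) • A j) *
            (∑ j, Complex.exp (Complex.I * (ω j) * τ) • A j) := by
    intro θ
    have hint : @IntervalIntegrable _ _ NormedAddCommGroup.toENormedAddCommMonoid.toENormedAddMonoid
        (fun τ : ℝ => (∑ j, Complex.exp (Complex.I * (ω j) * τ) • A j) *
          (∑ j, (Complex.I * (ω j) * Complex.exp (Complex.I * (ω j) * τ)) • A j))
        MeasureTheory.volume 0 θ :=
      (hcontH.matrix_mul hcontH').intervalIntegrable 0 θ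
    have hcomm := (ctL N).intervalIntegral_comp_comm hint
    rw [Matrix.conjTranspose_smul, star_trivial]
    congr 1
    calc (∫ τ in (0:ℝ)..θ,
            (∑ j, Complex.exp (Complex.I * (ω j) * τ) • A j) *
              (∑ j, (Complex.I * (ω j) * Complex.exp (Complex.I * (ω j) * τ)) • A j))ᴴ
        = ctL N (∫ τ in (0:ℝ)..θ,
            (∑ j, Complex.exp (Complex.I * (ω j) * τ) • A j) *
              (∑ j, (Complex.I * (ω j) * Complex.exp (Complex.I * (ω j) * τ)) • A j)) := rfl
      _ = ∫ τ in (0:ℝ)..θ, ctL N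
            ((∑ j, Complex.exp (Complex.I * (ω j) * τ) • A j) *
              (∑ j, (Complex.I * (ω j) * Complex.exp (Complex.I * (ω j) * τ)) • A j)) :=
          hcomm.symm
      _ = _ := by
          refine intervalIntegral.integral_congr fun τ _ => ?_
          show ((∑ j, Complex.exp (Complex.I * (ω j) * τ) • A j) *
              (∑ j, (Complex.I * (ω j) * Complex.exp (Complex.I * (ω j) * τ)) • A j))ᴴ = _
          rw [Matrix.conjTranspose_mul, (hherm' τ).eq, (hHerm τ).eq]
  have h2 : Tendsto
      (fun θ : ℝ => ((θ⁻¹ : ℝ) •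
        ∫ τ in (0:ℝ)..θ,
          (∑ j, Complex.exp (Complex.I * (ω j) * τ) • A j) *
            (∑ j, (Complex.I * (ω j) * Complex.exp (Complex.I * (ω j) * τ)) • A j))ᴴ)
      atTop (nhds Lᴴ) :=
    (Continuous.tendsto (continuous_id.matrix_conjTranspose) L).comp h1
  have h3 : Lᴴ = L' := tendsto_nhds_unique ((h2.congr fun θ => hconj θ)) h1'
  have h4 : L' = -L := by
    rw [hL'def, hLdef, ← Finset.sum_neg_distrib]
    refine Finset.sum_congr rfl fun j _ => ?_
    rw [← Finset.sum_neg_distrib]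
    refine Finset.sum_congr rfl fun k _ => ?_
    by_cases h : ω j + ω k = 0
    · have hjk : (ω j : ℂ) = -(ω k : ℂ) := by
        have := eq_neg_of_add_eq_zero_left h
        push_cast [this]; ring
      simp [if_pos h, hjk, mul_neg, neg_smul]
    · simp [if_neg h]
  refine ⟨L, h1, ?_⟩
  show ((-Complex.I) • L)ᴴ = (-Complex.I) • L
  rw [Matrix.conjTranspose_smul, h3, h4]
  simp [Complex.star_def, smul_neg, neg_smul]
end
end
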